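/- For every n ≥ 0, the conductances of E_n⁺ = {q₀, x₀, …, x_{2^n}} computed at level n satisfy c^n_{q₀,x₀} = c^n_{q₀,x_{2^n}} = a_n and c^n_{q₀,x_j} = 2a_n for all 0 < j < 2^n, where a_n = 7·5^n/(3^n + 6·10^n). -/

import Mathlib

open scoped BigOperators
open scoped Classical

noncomputable section

namespace SGPaper

def q : Fin 3 → ℝ × ℝ
  | 0 => (1 / 2, Real.sqrt 3 / 2)
  | 1 => (0, 0)
  | 2 => (1, 0)

def Fmap (i : Fin 3) (x : ℝ × ℝ) : ℝ × ℝ := (2⁻¹ : ℝ) • (x + q i)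

-- abbreviations
local notation "s3" => Real.sqrt 3

lemma s3_pos : 0 < s3 := Real.sqrt_pos.mpr (by norm_num)
lemma s3_sq : s3 * s3 = 3 := Real.mul_self_sqrt (by norm_num)

lemma q0_def : q 0 = (1/2, s3/2) := rfl
lemma q1_def : q 1 = (0, 0) := rfl
lemma q2_def : q 2 = (1, 0) := rfl

lemma q_ne_01 : q 0 ≠ q 1 := by
  simp only [q0_def, q1_def, Prod.mk.injEq, ne_eq, not_and]; intro h; norm_num at h
lemma q_ne_02 : q 0 ≠ q 2 := by
  simp only [q0_def, q2_def, Prod.mk.injEq, ne_eq, not_and]; intro h; norm_num at h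
lemma q_ne_12 : q 1 ≠ q 2 := by
  simp only [q1_def, q2_def, Prod.mk.injEq, ne_eq, not_and]; intro h; norm_num at h

lemma Fmap_fst (i : Fin 3) (x : ℝ × ℝ) : (Fmap i x).1 = (x.1 + (q i).1) / 2 := by
  simp [Fmap, Prod.smul_def]; ring
lemma Fmap_snd (i : Fin 3) (x : ℝ × ℝ) : (Fmap i x).2 = (x.2 + (q i).2) / 2 := by
  simp [Fmap, Prod.smul_def]; ring

lemma Fmap_inj (i : Fin 3) : Function.Injective (Fmap i) := by
  intro x y h
  have : x + q i = y + q i := smul_right_injective (ℝ × ℝ) (by norm_num : (2⁻¹:ℝ) ≠ 0) h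
  exact add_right_cancel this

lemma two_smul_Fmap (i : Fin 3) (x : ℝ × ℝ) : (2:ℝ) • Fmap i x - q i = x := by
  simp [Fmap, smul_smul]

/-- The closed triangle with corners q0 q1 q2. -/
def T : Set (ℝ × ℝ) := {p | 0 ≤ p.2 ∧ s3 * p.1 + p.2 ≤ s3 ∧ p.2 ≤ s3 * p.1}

lemma qT (i : Fin 3) : q i ∈ T := by
  have h := s3_pos
  fin_cases i <;> refine ⟨?_, ?_, ?_⟩ <;> simp [q, T] <;> nlinarith [s3_sq]

lemma T_x_nonneg {p : ℝ × ℝ} (hp : p ∈ T) : 0 ≤ p.1 := by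
  obtain ⟨h1, h2, h3⟩ := hp; nlinarith [s3_pos, s3_sq]
lemma T_x_le_one {p : ℝ × ℝ} (hp : p ∈ T) : p.1 ≤ 1 := by
  obtain ⟨h1, h2, h3⟩ := hp; nlinarith [s3_pos, s3_sq]

lemma FmapT {i : Fin 3} {p : ℝ × ℝ} (hp : p ∈ T) : Fmap i p ∈ T := by
  obtain ⟨h1, h2, h3⟩ := hp
  refine ⟨?_, ?_, ?_⟩ <;>
    simp only [Set.mem_setOf_eq, Fmap_fst, Fmap_snd] <;> fin_cases i <;> simp [q] <;>
    nlinarith [s3_pos, s3_sq]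

/-- F0 T ∩ F1 T ⊆ {F1 q0}. -/
lemma inter01 {u v : ℝ × ℝ} (hu : u ∈ T) (hv : v ∈ T) (h : Fmap 0 u = Fmap 1 v) :
    v = q 0 := by
  obtain ⟨u1, u2, u3⟩ := hu
  obtain ⟨v1, v2, v3⟩ := hv
  have hf := congrArg Prod.fst h
  have hs := congrArg Prod.snd h
  rw [Fmap_fst, Fmap_fst] at hf
  rw [Fmap_snd, Fmap_snd] at hs
  simp only [q0_def, q1_def] at hf hs
  -- ℓ(p) = p.1 + s3 * p.2 ; ℓ(u) ≥ 0, ℓ(v) ≤ 2, (ℓu + 2)/2 = ℓv/2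
  have hv1 : v.1 = 1/2 := by nlinarith [s3_pos, s3_sq]
  have hv2 : v.2 = s3/2 := by
    have h1 : s3 * v.2 = s3 * (s3/2) := by nlinarith [s3_pos, s3_sq]
    exact mul_left_cancel₀ (ne_of_gt s3_pos) h1
  rw [q0_def]; exact Prod.ext hv1 hv2

/-- F0 T ∩ F2 T ⊆ {F2 q0}. -/
lemma inter02 {u v : ℝ × ℝ} (hu : u ∈ T) (hv : v ∈ T) (h : Fmap 0 u = Fmap 2 v) :
    v = q 0 := by
  obtain ⟨u1, u2, u3⟩ := hu
  obtain ⟨v1, v2, v3⟩ := hv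
  have hf := congrArg Prod.fst h
  have hs := congrArg Prod.snd h
  rw [Fmap_fst, Fmap_fst] at hf
  rw [Fmap_snd, Fmap_snd] at hs
  simp only [q0_def, q2_def] at hf hs
  have hv1 : v.1 = 1/2 := by nlinarith [s3_pos, s3_sq]
  have hv2 : v.2 = s3/2 := by
    have h1 : s3 * v.2 = s3 * (s3/2) := by nlinarith [s3_pos, s3_sq]
    exact mul_left_cancel₀ (ne_of_gt s3_pos) h1
  rw [q0_def]; exact Prod.ext hv1 hv2

/-- F1 T ∩ F2 T ⊆ {F2 q1}. -/
lemma inter12 {u v : ℝ × ℝ} (hu : u ∈ T) (hv : v ∈ T) (h : Fmap 1 u = Fmap 2 v) :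
    v = q 1 := by
  obtain ⟨u1, u2, u3⟩ := hu
  obtain ⟨v1, v2, v3⟩ := hv
  have hf := congrArg Prod.fst h
  have hs := congrArg Prod.snd h
  rw [Fmap_fst, Fmap_fst] at hf
  rw [Fmap_snd, Fmap_snd] at hs
  simp only [q1_def, q2_def] at hf hs
  have hv1 : v.1 = 0 := by nlinarith [s3_pos, s3_sq]
  have hv2 : v.2 = 0 := by nlinarith [s3_pos, s3_sq]
  rw [q1_def]; exact Prod.ext hv1 hv2
def Fword (w : List (Fin 3)) : ℝ × ℝ → ℝ × ℝ :=
  w.foldr (fun i f => Fmap i ∘ f) id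

def V (m : ℕ) : Set (ℝ × ℝ) :=
  {x | ∃ w : List (Fin 3), w.length = m ∧ ∃ i : Fin 3, x = Fword w (q i)}

def Nbr (m : ℕ) (x y : ℝ × ℝ) : Prop :=
  x ≠ y ∧ ∃ w : List (Fin 3), w.length = m ∧
    (∃ i : Fin 3, x = Fword w (q i)) ∧ (∃ j : Fin 3, y = Fword w (q j))

def edgeVal (u : ℝ × ℝ → ℝ) : Sym2 (ℝ × ℝ) → ℝ :=
  Sym2.lift ⟨fun x y => (u x - u y) ^ 2, fun _ _ => by ring⟩

def IsEdge (m : ℕ) (e : Sym2 (ℝ × ℝ)) : Prop :=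
  ∃ x y : ℝ × ℝ, Nbr m x y ∧ e = s(x, y)

def Energy (m : ℕ) (u : ℝ × ℝ → ℝ) : ℝ :=
  (5 / 3 : ℝ) ^ m * ∑' e : {e : Sym2 (ℝ × ℝ) // IsEdge m e}, edgeVal u e

def Q (m : ℕ) (E : Set (ℝ × ℝ)) (v : ℝ × ℝ → ℝ) : ℝ :=
  sInf {r | ∃ u : ℝ × ℝ → ℝ, (∀ x ∈ E, u x = v x) ∧ r = Energy m u}

def ind (z : ℝ × ℝ) : ℝ × ℝ → ℝ := fun t => if t = z then 1 else 0

def cond (m : ℕ) (E : Set (ℝ × ℝ)) (x y : ℝ × ℝ) : ℝ :=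
  (Q m E (ind x) + Q m E (ind y) - Q m E (ind x + ind y)) / 2

def xb (n j : ℕ) : ℝ × ℝ := q 1 + ((j : ℝ) / 2 ^ n) • (q 2 - q 1)

def Ebot (n : ℕ) : Set (ℝ × ℝ) := {p | ∃ j ≤ 2 ^ n, p = xb n j}

def Eplus (n : ℕ) : Set (ℝ × ℝ) := insert (q 0) (Ebot n)

-- ### V basics
lemma mem_V_iff {m : ℕ} {x : ℝ × ℝ} :
    x ∈ V m ↔ ∃ w : List (Fin 3), w.length = m ∧ ∃ i : Fin 3, x = Fword w (q i) :=
  Iff.rfl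

lemma qV (i : Fin 3) : q i ∈ V 0 := ⟨[], rfl, i, rfl⟩

lemma Fword_cons (i : Fin 3) (w : List (Fin 3)) (x : ℝ × ℝ) :
    Fword (i :: w) x = Fmap i (Fword w x) := rfl

lemma Fmap_V {m : ℕ} {x : ℝ × ℝ} (hx : x ∈ V m) (i : Fin 3) : Fmap i x ∈ V (m+1) := by
  obtain ⟨w, hw, j, rfl⟩ := hx
  exact ⟨i :: w, by simp [hw], j, rfl⟩

lemma V_zero {x : ℝ × ℝ} (hx : x ∈ V 0) : ∃ i : Fin 3, x = q i := by
  obtain ⟨w, hw, i, rfl⟩ := hx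
  rw [List.length_eq_zero_iff] at hw
  exact ⟨i, by simp [hw, Fword]⟩

lemma V_succ {m : ℕ} {x : ℝ × ℝ} (hx : x ∈ V (m+1)) :
    ∃ i : Fin 3, ∃ y ∈ V m, x = Fmap i y := by
  obtain ⟨w, hw, j, rfl⟩ := hx
  cases w with
  | nil => simp at hw
  | cons i w' =>
    exact ⟨i, Fword w' (q j), ⟨w', by simpa using hw, j, rfl⟩, rfl⟩

lemma V_subset_T : ∀ m, V m ⊆ T := by
  intro m
  induction m with
  | zero => intro x hx; obtain ⟨i, rfl⟩ := V_zero hx; exact qT i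
  | succ m ih =>
    intro x hx
    obtain ⟨i, y, hy, rfl⟩ := V_succ hx
    exact FmapT (ih hy)

-- ### the edge finset
def cellPairs : Finset (Sym2 (ℝ × ℝ)) := {s(q 0, q 1), s(q 0, q 2), s(q 1, q 2)}

def edgeFinset : ℕ → Finset (Sym2 (ℝ × ℝ))
  | 0 => cellPairs
  | n+1 => Finset.univ.biUnion (fun i : Fin 3 => (edgeFinset n).image (Sym2.map (Fmap i)))

/-- every edge has distinct endpoints lying in `V n` (hence in `T`). -/
lemma edge_endpoints {n : ℕ} {e : Sym2 (ℝ × ℝ)} (he : e ∈ edgeFinset n) :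
    ∃ x y : ℝ × ℝ, x ≠ y ∧ x ∈ V n ∧ y ∈ V n ∧ e = s(x, y) := by
  induction n generalizing e with
  | zero =>
    simp only [edgeFinset, cellPairs, Finset.mem_insert, Finset.mem_singleton] at he
    rcases he with rfl | rfl | rfl
    · exact ⟨q 0, q 1, q_ne_01, qV 0, qV 1, rfl⟩
    · exact ⟨q 0, q 2, q_ne_02, qV 0, qV 2, rfl⟩
    · exact ⟨q 1, q 2, q_ne_12, qV 1, qV 2, rfl⟩
  | succ n ih =>
    simp only [edgeFinset, Finset.mem_biUnion, Finset.mem_univ, true_and,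
      Finset.mem_image] at he
    obtain ⟨i, e', he', rfl⟩ := he
    obtain ⟨x, y, hxy, hx, hy, rfl⟩ := ih he'
    exact ⟨Fmap i x, Fmap i y, fun h => hxy (Fmap_inj i h), Fmap_V hx i, Fmap_V hy i,
      by simp [Sym2.map_pair_eq]⟩

lemma mem_edgeFinset_iff {n : ℕ} {e : Sym2 (ℝ × ℝ)} : e ∈ edgeFinset n ↔ IsEdge n e := by
  induction n generalizing e with
  | zero =>
    constructor
    · intro he
      simp only [edgeFinset, cellPairs, Finset.mem_insert, Finset.mem_singleton] at he
      rcases he with rfl | rfl | rfl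
      · exact ⟨q 0, q 1, ⟨q_ne_01, [], rfl, ⟨0, rfl⟩, ⟨1, rfl⟩⟩, rfl⟩
      · exact ⟨q 0, q 2, ⟨q_ne_02, [], rfl, ⟨0, rfl⟩, ⟨2, rfl⟩⟩, rfl⟩
      · exact ⟨q 1, q 2, ⟨q_ne_12, [], rfl, ⟨1, rfl⟩, ⟨2, rfl⟩⟩, rfl⟩
    · rintro ⟨x, y, ⟨hxy, w, hw, ⟨i, rfl⟩, ⟨j, rfl⟩⟩, rfl⟩
      rw [List.length_eq_zero_iff] at hw
      subst hw
      simp only [Fword] at hxy ⊢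
      have hij : i ≠ j := fun h => hxy (by rw [h])
      simp only [edgeFinset, cellPairs, Finset.mem_insert, Finset.mem_singleton]
      fin_cases i <;> fin_cases j <;> simp_all [Sym2.eq_swap]
  | succ n ih =>
    constructor
    · intro he
      simp only [edgeFinset, Finset.mem_biUnion, Finset.mem_univ, true_and,
        Finset.mem_image] at he
      obtain ⟨i, e', he', rfl⟩ := he
      obtain ⟨x, y, ⟨hxy, w, hw, ⟨a, rfl⟩, ⟨b, rfl⟩⟩, rfl⟩ := ih.mp he'
      exact ⟨Fmap i (Fword w (q a)), Fmap i (Fword w (q b)),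
        ⟨fun h => hxy (Fmap_inj i h), i :: w, by simp [hw], ⟨a, rfl⟩, ⟨b, rfl⟩⟩,
        by simp [Sym2.map_pair_eq]⟩
    · rintro ⟨x, y, ⟨hxy, w, hw, ⟨a, rfl⟩, ⟨b, rfl⟩⟩, rfl⟩
      cases w with
      | nil => simp at hw
      | cons i w' =>
        simp only [edgeFinset, Finset.mem_biUnion, Finset.mem_univ, true_and,
          Finset.mem_image]
        refine ⟨i, s(Fword w' (q a), Fword w' (q b)), ?_, by simp [Fword_cons, Sym2.map_pair_eq]⟩
        apply ih.mpr
        refine ⟨_, _, ⟨?_, w', by simpa using hw, ⟨a, rfl⟩, ⟨b, rfl⟩⟩, rfl⟩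
        intro h
        exact hxy (by simp [Fword_cons, h])
-- ### pairVal and eSum
def pairVal (u v : ℝ × ℝ → ℝ) : Sym2 (ℝ × ℝ) → ℝ :=
  Sym2.lift ⟨fun x y => (u x - u y) * (v x - v y), fun _ _ => by ring⟩

def eSum (n : ℕ) (u v : ℝ × ℝ → ℝ) : ℝ := ∑ e ∈ edgeFinset n, pairVal u v e

lemma pairVal_mk (u v : ℝ × ℝ → ℝ) (x y : ℝ × ℝ) :
    pairVal u v s(x, y) = (u x - u y) * (v x - v y) := rfl

lemma edgeVal_mk (u : ℝ × ℝ → ℝ) (x y : ℝ × ℝ) :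
    edgeVal u s(x, y) = (u x - u y) ^ 2 := rfl

lemma edgeVal_nonneg (u : ℝ × ℝ → ℝ) (e : Sym2 (ℝ × ℝ)) : 0 ≤ edgeVal u e := by
  induction e using Sym2.ind with
  | _ x y => rw [edgeVal_mk]; positivity

/-- two functions agreeing on V n give the same eSum (first argument). -/
lemma eSum_congr {n : ℕ} {u u' v : ℝ × ℝ → ℝ} (h : ∀ p ∈ V n, u p = u' p) :
    eSum n u v = eSum n u' v := by
  unfold eSum
  apply Finset.sum_congr rfl
  intro e he
  obtain ⟨x, y, _, hx, hy, rfl⟩ := edge_endpoints he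
  rw [pairVal_mk, pairVal_mk, h x hx, h y hy]

lemma eSum_smul (n : ℕ) (t : ℝ) (u v : ℝ × ℝ → ℝ) :
    eSum n (fun p => t * u p) v = t * eSum n u v := by
  unfold eSum
  rw [Finset.mul_sum]
  apply Finset.sum_congr rfl
  intro e _
  induction e using Sym2.ind with
  | _ x y => rw [pairVal_mk, pairVal_mk]; ring

/-- Energy as a finite sum. -/
lemma Energy_eq_sum (n : ℕ) (u : ℝ × ℝ → ℝ) :
    Energy n u = (5/3 : ℝ)^n * ∑ e ∈ edgeFinset n, edgeVal u e := by
  unfold Energy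
  congr 1
  have h0 : (∑' e : {e : Sym2 (ℝ × ℝ) // IsEdge n e}, edgeVal u e)
      = ∑' e : Sym2 (ℝ × ℝ), Set.indicator {e | IsEdge n e} (edgeVal u) e :=
    tsum_subtype {e | IsEdge n e} (edgeVal u)
  have hvan : ∀ b ∉ edgeFinset n, Set.indicator {e | IsEdge n e} (edgeVal u) b = 0 := by
    intro b hb
    apply Set.indicator_of_notMem
    intro h
    exact hb (mem_edgeFinset_iff.mpr h)
  rw [h0, tsum_eq_sum hvan]
  apply Finset.sum_congr rfl
  intro e he
  exact Set.indicator_of_mem (show e ∈ {e | IsEdge n e} from mem_edgeFinset_iff.mp he) _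

lemma Energy_nonneg (n : ℕ) (u : ℝ × ℝ → ℝ) : 0 ≤ Energy n u := by
  rw [Energy_eq_sum]
  have : (0:ℝ) ≤ ∑ e ∈ edgeFinset n, edgeVal u e :=
    Finset.sum_nonneg fun e _ => edgeVal_nonneg u e
  positivity

/-- the energy expansion: E(u+g) = E(u) + 2 w eSum(u,g) + E(g). -/
lemma Energy_add (n : ℕ) (u g : ℝ × ℝ → ℝ) :
    Energy n (u + g) = Energy n u + 2 * (5/3 : ℝ)^n * eSum n u g + Energy n g := by
  simp only [Energy_eq_sum, eSum]
  rw [Finset.mul_sum, Finset.mul_sum, Finset.mul_sum, Finset.mul_sum]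
  rw [← Finset.sum_add_distrib, ← Finset.sum_add_distrib]
  apply Finset.sum_congr rfl
  intro e _
  induction e using Sym2.ind with
  | _ x y =>
    simp only [edgeVal_mk, pairVal_mk, Pi.add_apply]
    ring

-- ### disjointness of the cells and the fundamental edge recursion
lemma inter_eq {i j : Fin 3} (hij : i ≠ j) {a b c d : ℝ × ℝ}
    (ha : a ∈ T) (hb : b ∈ T) (hc : c ∈ T) (hd : d ∈ T)
    (h1 : Fmap i a = Fmap j c) (h2 : Fmap i b = Fmap j d) : Fmap i a = Fmap i b := by
  fin_cases i <;> fin_cases j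
  · exact absurd rfl hij
  · have h1' : Fmap 0 a = Fmap 1 c := h1
    have h2' : Fmap 0 b = Fmap 1 d := h2
    show Fmap 0 a = Fmap 0 b
    rw [h1', h2', inter01 ha hc h1', inter01 hb hd h2']
  · have h1' : Fmap 0 a = Fmap 2 c := h1
    have h2' : Fmap 0 b = Fmap 2 d := h2
    show Fmap 0 a = Fmap 0 b
    rw [h1', h2', inter02 ha hc h1', inter02 hb hd h2']
  · have h1' : Fmap 1 a = Fmap 0 c := h1
    have h2' : Fmap 1 b = Fmap 0 d := h2
    show Fmap 1 a = Fmap 1 b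
    rw [inter01 hc ha h1'.symm, inter01 hd hb h2'.symm]
  · exact absurd rfl hij
  · have h1' : Fmap 1 a = Fmap 2 c := h1
    have h2' : Fmap 1 b = Fmap 2 d := h2
    show Fmap 1 a = Fmap 1 b
    rw [h1', h2', inter12 ha hc h1', inter12 hb hd h2']
  · have h1' : Fmap 2 a = Fmap 0 c := h1
    have h2' : Fmap 2 b = Fmap 0 d := h2
    show Fmap 2 a = Fmap 2 b
    rw [inter02 hc ha h1'.symm, inter02 hd hb h2'.symm]
  · have h1' : Fmap 2 a = Fmap 1 c := h1
    have h2' : Fmap 2 b = Fmap 1 d := h2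
    show Fmap 2 a = Fmap 2 b
    rw [inter12 hc ha h1'.symm, inter12 hd hb h2'.symm]
  · exact absurd rfl hij

lemma image_disjoint {n : ℕ} {i j : Fin 3} (hij : i ≠ j) :
    Disjoint ((edgeFinset n).image (Sym2.map (Fmap i)))
      ((edgeFinset n).image (Sym2.map (Fmap j))) := by
  rw [Finset.disjoint_left]
  rintro e hei hej
  simp only [Finset.mem_image] at hei hej
  obtain ⟨e1, he1, rfl⟩ := hei
  obtain ⟨e2, he2, heq⟩ := hej
  obtain ⟨x, y, hxy, hx, hy, rfl⟩ := edge_endpoints he1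
  obtain ⟨x', y', hxy', hx', hy', rfl⟩ := edge_endpoints he2
  have hxT := V_subset_T n hx
  have hyT := V_subset_T n hy
  have hxT' := V_subset_T n hx'
  have hyT' := V_subset_T n hy'
  rw [Sym2.map_pair_eq, Sym2.map_pair_eq, Sym2.eq_iff] at heq
  rcases heq with ⟨h1, h2⟩ | ⟨h1, h2⟩
  · exact hxy' (Fmap_inj j (inter_eq hij.symm hxT' hyT' hxT hyT h1 h2))
  · exact hxy' (Fmap_inj j (inter_eq hij.symm hxT' hyT' hyT hxT h1 h2))

/-- The fundamental recursion: sums over level (n+1) edges decompose into cells. -/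
lemma edge_sum_rec (n : ℕ) (f : Sym2 (ℝ × ℝ) → ℝ) :
    ∑ e ∈ edgeFinset (n+1), f e
      = ∑ i : Fin 3, ∑ e ∈ edgeFinset n, f (Sym2.map (Fmap i) e) := by
  show ∑ e ∈ Finset.univ.biUnion _, f e = _
  rw [Finset.sum_biUnion]
  · exact Finset.sum_congr rfl fun i _ =>
      Finset.sum_image fun e1 _ e2 _ h => Sym2.map.injective (Fmap_inj i) h
  · intro i _ j _ hij
    exact image_disjoint hij

lemma pairVal_map (u v : ℝ × ℝ → ℝ) (F : ℝ × ℝ → ℝ × ℝ) (e : Sym2 (ℝ × ℝ)) :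
    pairVal u v (Sym2.map F e) = pairVal (u ∘ F) (v ∘ F) e := by
  induction e using Sym2.ind with
  | _ x y => rw [Sym2.map_pair_eq, pairVal_mk, pairVal_mk]; rfl

/-- eSum recursion. -/
lemma eSum_rec (n : ℕ) (u v : ℝ × ℝ → ℝ) :
    eSum (n+1) u v = ∑ i : Fin 3, eSum n (u ∘ Fmap i) (v ∘ Fmap i) := by
  unfold eSum
  rw [edge_sum_rec]
  exact Finset.sum_congr rfl fun i _ =>
    Finset.sum_congr rfl fun e _ => pairVal_map u v (Fmap i) e
-- ### corner point identities
lemma Fmap_self (i : Fin 3) : Fmap i (q i) = q i := by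
  simp [Fmap, smul_smul, two_smul]
  module

lemma F1q0 : Fmap 1 (q 0) = Fmap 0 (q 1) := by simp [Fmap, add_comm]
lemma F2q0 : Fmap 2 (q 0) = Fmap 0 (q 2) := by simp [Fmap, add_comm]
lemma F2q1 : Fmap 2 (q 1) = Fmap 1 (q 2) := by simp [Fmap, add_comm]

lemma q0_mem0 : q 0 ∈ Fmap 0 '' T := ⟨q 0, qT 0, Fmap_self 0⟩
lemma q1_mem1 : q 1 ∈ Fmap 1 '' T := ⟨q 1, qT 1, Fmap_self 1⟩

lemma snd_mem0 {p : ℝ × ℝ} (hp : p ∈ Fmap 0 '' T) : s3 / 4 ≤ p.2 := by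
  obtain ⟨u, hu, rfl⟩ := hp
  rw [Fmap_snd]
  have := hu.1
  simp only [q0_def]
  linarith

lemma q1_notmem0 : q 1 ∉ Fmap 0 '' T := by
  intro h
  have := snd_mem0 h
  rw [q1_def] at this
  have h2 := s3_pos
  simp only at this
  linarith

lemma q2_notmem0 : q 2 ∉ Fmap 0 '' T := by
  intro h
  have := snd_mem0 h
  rw [q2_def] at this
  have h2 := s3_pos
  simp only at this
  linarith

lemma q2_notmem1 : q 2 ∉ Fmap 1 '' T := by
  rintro ⟨u, hu, h⟩
  have := congrArg Prod.fst h
  rw [Fmap_fst] at this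
  simp [q] at this
  have := T_x_le_one hu
  linarith

lemma two_smul_q (i : Fin 3) : (2:ℝ) • q i - q i = q i := by
  have := two_smul_Fmap i (q i)
  rwa [Fmap_self] at this

-- ### the harmonic extension function
def harm : ℕ → ℝ → ℝ → ℝ → ℝ × ℝ → ℝ
  | 0, x0, x1, x2 => fun p => if p = q 0 then x0 else if p = q 1 then x1 else x2
  | n+1, x0, x1, x2 => fun p =>
      if p ∈ Fmap 0 '' T then
        harm n x0 ((2*x0+2*x1+x2)/5) ((2*x0+x1+2*x2)/5) ((2:ℝ) • p - q 0)
      else if p ∈ Fmap 1 '' T then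
        harm n ((2*x0+2*x1+x2)/5) x1 ((x0+2*x1+2*x2)/5) ((2:ℝ) • p - q 1)
      else
        harm n ((2*x0+x1+2*x2)/5) ((x0+2*x1+2*x2)/5) x2 ((2:ℝ) • p - q 2)

lemma harm_corner0 : ∀ n x0 x1 x2, harm n x0 x1 x2 (q 0) = x0 := by
  intro n
  induction n with
  | zero => intro x0 x1 x2; simp [harm]
  | succ n ih =>
    intro x0 x1 x2
    simp only [harm, if_pos q0_mem0, two_smul_q]
    exact ih _ _ _

lemma harm_corner1 : ∀ n x0 x1 x2, harm n x0 x1 x2 (q 1) = x1 := by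
  intro n
  induction n with
  | zero => intro x0 x1 x2; simp [harm, q_ne_01.symm]
  | succ n ih =>
    intro x0 x1 x2
    simp only [harm, if_neg q1_notmem0, if_pos q1_mem1, two_smul_q]
    exact ih _ _ _

lemma harm_corner2 : ∀ n x0 x1 x2, harm n x0 x1 x2 (q 2) = x2 := by
  intro n
  induction n with
  | zero => intro x0 x1 x2; simp [harm, q_ne_02.symm, q_ne_12.symm]
  | succ n ih =>
    intro x0 x1 x2
    simp only [harm, if_neg q2_notmem0, if_neg q2_notmem1, two_smul_q]
    exact ih _ _ _

-- ### cell restriction lemmas for harm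
lemma harm_cell0 {n : ℕ} (x0 x1 x2 : ℝ) {p : ℝ × ℝ} (hp : p ∈ T) :
    harm (n+1) x0 x1 x2 (Fmap 0 p)
      = harm n x0 ((2*x0+2*x1+x2)/5) ((2*x0+x1+2*x2)/5) p := by
  simp only [harm, if_pos (Set.mem_image_of_mem _ hp), two_smul_Fmap]

lemma harm_cell1 {n : ℕ} (x0 x1 x2 : ℝ) {p : ℝ × ℝ} (hp : p ∈ T) :
    harm (n+1) x0 x1 x2 (Fmap 1 p)
      = harm n ((2*x0+2*x1+x2)/5) x1 ((x0+2*x1+2*x2)/5) p := by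
  by_cases hq : p = q 0
  · subst hq
    rw [F1q0]
    simp only [harm, if_pos (Set.mem_image_of_mem _ (qT 1)), two_smul_Fmap]
    rw [harm_corner1, harm_corner0]
  · have h0 : Fmap 1 p ∉ Fmap 0 '' T := by
      rintro ⟨u, hu, heq⟩
      exact hq (inter01 hu hp heq)
    simp only [harm, if_neg h0, if_pos (Set.mem_image_of_mem _ hp), two_smul_Fmap]

lemma harm_cell2 {n : ℕ} (x0 x1 x2 : ℝ) {p : ℝ × ℝ} (hp : p ∈ T) :
    harm (n+1) x0 x1 x2 (Fmap 2 p)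
      = harm n ((2*x0+x1+2*x2)/5) ((x0+2*x1+2*x2)/5) x2 p := by
  by_cases hq : p = q 0
  · subst hq
    rw [F2q0]
    simp only [harm, if_pos (Set.mem_image_of_mem _ (qT 2)), two_smul_Fmap]
    rw [harm_corner2, harm_corner0]
  · by_cases hq1 : p = q 1
    · subst hq1
      rw [F2q1]
      have h0 : Fmap 1 (q 2) ∉ Fmap 0 '' T := by
        rintro ⟨u, hu, heq⟩
        exact q_ne_02.symm (inter01 hu (qT 2) heq)
      simp only [harm, if_neg h0, if_pos (Set.mem_image_of_mem _ (qT 2)), two_smul_Fmap]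
      rw [harm_corner2, harm_corner1]
    · have h0 : Fmap 2 p ∉ Fmap 0 '' T := by
        rintro ⟨u, hu, heq⟩
        exact hq (inter02 hu hp heq)
      have h1 : Fmap 2 p ∉ Fmap 1 '' T := by
        rintro ⟨u, hu, heq⟩
        exact hq1 (inter12 hu hp heq)
      simp only [harm, if_neg h0, if_neg h1, two_smul_Fmap]

-- ### the explicit sum over the base edge set
lemma sum_cellPairs (f : Sym2 (ℝ × ℝ) → ℝ) :
    ∑ e ∈ cellPairs, f e = f s(q 0, q 1) + f s(q 0, q 2) + f s(q 1, q 2) := by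
  have h1 : s(q 0, q 1) ∉ ({s(q 0, q 2), s(q 1, q 2)} : Finset (Sym2 (ℝ × ℝ))) := by
    simp [Sym2.eq_iff, q_ne_01, q_ne_02, q_ne_12, q_ne_01.symm, q_ne_02.symm, q_ne_12.symm]
  have h2 : s(q 0, q 2) ∉ ({s(q 1, q 2)} : Finset (Sym2 (ℝ × ℝ))) := by
    simp [Sym2.eq_iff, q_ne_01, q_ne_02, q_ne_12, q_ne_01.symm, q_ne_02.symm, q_ne_12.symm]
  rw [show cellPairs = insert s(q 0, q 1) {s(q 0, q 2), s(q 1, q 2)} from rfl,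
    Finset.sum_insert h1, Finset.sum_insert h2, Finset.sum_singleton]
  ring

lemma eSum_zero (u g : ℝ × ℝ → ℝ) :
    eSum 0 u g = (u (q 0) - u (q 1)) * (g (q 0) - g (q 1))
      + (u (q 0) - u (q 2)) * (g (q 0) - g (q 2))
      + (u (q 1) - u (q 2)) * (g (q 1) - g (q 2)) := by
  show ∑ e ∈ cellPairs, pairVal u g e = _
  rw [sum_cellPairs, pairVal_mk, pairVal_mk, pairVal_mk]

/-- The key flux identity for harmonic extensions (normal derivatives at corners). -/
lemma harm_flux : ∀ n x0 x1 x2 (g : ℝ × ℝ → ℝ),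
    eSum n (harm n x0 x1 x2) g
      = (3/5 : ℝ)^n * ((2*x0-x1-x2) * g (q 0) + (2*x1-x0-x2) * g (q 1)
          + (2*x2-x0-x1) * g (q 2)) := by
  intro n
  induction n with
  | zero =>
    intro x0 x1 x2 g
    rw [eSum_zero, harm_corner0, harm_corner1, harm_corner2]
    ring
  | succ n ih =>
    intro x0 x1 x2 g
    rw [eSum_rec, Fin.sum_univ_three]
    have e0 : eSum n (harm (n+1) x0 x1 x2 ∘ Fmap 0) (g ∘ Fmap 0)
        = eSum n (harm n x0 ((2*x0+2*x1+x2)/5) ((2*x0+x1+2*x2)/5)) (g ∘ Fmap 0) :=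
      eSum_congr fun p hp => harm_cell0 x0 x1 x2 (V_subset_T n hp)
    have e1 : eSum n (harm (n+1) x0 x1 x2 ∘ Fmap 1) (g ∘ Fmap 1)
        = eSum n (harm n ((2*x0+2*x1+x2)/5) x1 ((x0+2*x1+2*x2)/5)) (g ∘ Fmap 1) :=
      eSum_congr fun p hp => harm_cell1 x0 x1 x2 (V_subset_T n hp)
    have e2 : eSum n (harm (n+1) x0 x1 x2 ∘ Fmap 2) (g ∘ Fmap 2)
        = eSum n (harm n ((2*x0+x1+2*x2)/5) ((x0+2*x1+2*x2)/5) x2) (g ∘ Fmap 2) :=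
      eSum_congr fun p hp => harm_cell2 x0 x1 x2 (V_subset_T n hp)
    rw [e0, e1, e2, ih, ih, ih]
    simp only [Function.comp_apply]
    rw [Fmap_self 0, Fmap_self 1, Fmap_self 2, F1q0, F2q0, F2q1, pow_succ]
    ring
-- ### the sequences
def den (n : ℕ) : ℝ := 3^n + 6*(2^n*5^n)
def al (n : ℕ) : ℝ := 7*3^n / den n
def dd (n : ℕ) : ℝ := 14*(2^n*3^n) / den n
def tt (n : ℕ) : ℝ := al (n+1) / al n

lemma den_pos (n : ℕ) : 0 < den n := by unfold den; positivity
lemma al_pos (n : ℕ) : 0 < al n := by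
  unfold al; exact div_pos (by positivity) (den_pos n)

lemma key1 (n : ℕ) : (3/5 : ℝ)^n * (tt n - 1) + tt n * dd n = 0 := by
  unfold tt al dd
  have h1 := den_pos n
  have h2 := den_pos (n+1)
  rw [div_pow]
  field_simp
  unfold den
  ring

lemma key2 (n : ℕ) : dd (n+1) = (3/5 : ℝ)^n * (2 - 2 * tt n) := by
  unfold tt al dd
  have h1 := den_pos n
  have h2 := den_pos (n+1)
  rw [div_pow]
  field_simp
  unfold den
  ring

lemma key3 (n : ℕ) : al (n+1) = tt n * al n := by
  unfold tt
  rw [div_mul_cancel₀ _ (al_pos n).ne']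

-- ### the harmonic extension of the indicator of the top point with bottom row grounded
def h0 : ℕ → ℝ × ℝ → ℝ
  | 0 => fun p => if p = q 0 then 1 else 0
  | n+1 => fun p =>
      if p ∈ Fmap 0 '' T then harm n 1 (tt n) (tt n) ((2:ℝ) • p - q 0)
      else if p ∈ Fmap 1 '' T then tt n * h0 n ((2:ℝ) • p - q 1)
      else tt n * h0 n ((2:ℝ) • p - q 2)

lemma h0_q0 : ∀ n, h0 n (q 0) = 1 := by
  intro n
  induction n with
  | zero => simp [h0]
  | succ n ih =>
    simp only [h0, if_pos q0_mem0, two_smul_q]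
    rw [harm_corner0]

lemma h0_q1 : ∀ n, h0 n (q 1) = 0 := by
  intro n
  induction n with
  | zero => simp [h0, q_ne_01.symm]
  | succ n ih =>
    simp only [h0, if_neg q1_notmem0, if_pos q1_mem1, two_smul_q]
    rw [ih, mul_zero]

lemma h0_q2 : ∀ n, h0 n (q 2) = 0 := by
  intro n
  induction n with
  | zero => simp [h0, q_ne_02.symm]
  | succ n ih =>
    simp only [h0, if_neg q2_notmem0, if_neg q2_notmem1, two_smul_q]
    rw [ih, mul_zero]

lemma h0_cell0 {n : ℕ} {p : ℝ × ℝ} (hp : p ∈ T) :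
    h0 (n+1) (Fmap 0 p) = harm n 1 (tt n) (tt n) p := by
  simp only [h0, if_pos (Set.mem_image_of_mem _ hp), two_smul_Fmap]

lemma h0_cell1 {n : ℕ} {p : ℝ × ℝ} (hp : p ∈ T) :
    h0 (n+1) (Fmap 1 p) = tt n * h0 n p := by
  by_cases hq : p = q 0
  · subst hq
    rw [F1q0]
    simp only [h0, if_pos (Set.mem_image_of_mem _ (qT 1)), two_smul_Fmap]
    rw [harm_corner1, h0_q0, mul_one]
  · have hn0 : Fmap 1 p ∉ Fmap 0 '' T := by
      rintro ⟨u, hu, heq⟩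
      exact hq (inter01 hu hp heq)
    simp only [h0, if_neg hn0, if_pos (Set.mem_image_of_mem _ hp), two_smul_Fmap]

lemma h0_cell2 {n : ℕ} {p : ℝ × ℝ} (hp : p ∈ T) :
    h0 (n+1) (Fmap 2 p) = tt n * h0 n p := by
  by_cases hq : p = q 0
  · subst hq
    rw [F2q0]
    simp only [h0, if_pos (Set.mem_image_of_mem _ (qT 2)), two_smul_Fmap]
    rw [harm_corner2, h0_q0, mul_one]
  · by_cases hq1 : p = q 1
    · subst hq1
      rw [F2q1]
      have hn0 : Fmap 1 (q 2) ∉ Fmap 0 '' T := by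
        rintro ⟨u, hu, heq⟩
        exact q_ne_02.symm (inter01 hu (qT 2) heq)
      simp only [h0, if_neg hn0, if_pos (Set.mem_image_of_mem _ (qT 2)), two_smul_Fmap,
        h0_q1, h0_q2, mul_zero]
    · have hn0 : Fmap 2 p ∉ Fmap 0 '' T := by
        rintro ⟨u, hu, heq⟩
        exact hq (inter02 hu hp heq)
      have hn1 : Fmap 2 p ∉ Fmap 1 '' T := by
        rintro ⟨u, hu, heq⟩
        exact hq1 (inter12 hu hp heq)
      simp only [h0, if_neg hn0, if_neg hn1, two_smul_Fmap]

-- ### bottom row points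
lemma xb_def (n j : ℕ) : xb n j = ((j : ℝ) / 2^n, 0) := by
  simp [xb, q, Prod.smul_def]

lemma xb_zero (n : ℕ) : xb n 0 = q 1 := by simp [xb_def, q1_def]
lemma xb_top (n : ℕ) : xb n (2^n) = q 2 := by
  simp only [xb_def, q2_def]
  norm_num

lemma xbT {n j : ℕ} (hj : j ≤ 2^n) : xb n j ∈ T := by
  rw [xb_def]
  have h1 : (0:ℝ) ≤ (j:ℝ)/2^n := by positivity
  have h2 : (j:ℝ)/2^n ≤ 1 := by
    rw [div_le_one (by positivity)]
    exact_mod_cast hj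
  refine ⟨le_refl 0, ?_, ?_⟩ <;> simp only <;> nlinarith [s3_pos]

lemma xb_ne_q0 (n j : ℕ) : xb n j ≠ q 0 := by
  rw [xb_def, q0_def]
  intro h
  have := congrArg Prod.snd h
  simp only at this
  have := s3_pos
  linarith

lemma xb_inj {n i j : ℕ} (h : xb n i = xb n j) : i = j := by
  rw [xb_def, xb_def] at h
  have h1 := congrArg Prod.fst h
  simp only at h1
  have h2 : (i:ℝ) = j := by
    field_simp at h1
    exact_mod_cast h1
  exact_mod_cast h2

lemma F1xb (n j : ℕ) : Fmap 1 (xb n j) = xb (n+1) j := by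
  rw [xb_def, xb_def]
  apply Prod.ext
  · rw [Fmap_fst]; simp only [q1_def]; ring
  · rw [Fmap_snd]; simp [q1_def]

lemma F2xb (n j : ℕ) : Fmap 2 (xb n j) = xb (n+1) (2^n + j) := by
  rw [xb_def, xb_def]
  apply Prod.ext
  · rw [Fmap_fst]; simp only [q2_def]; push_cast; field_simp; ring
  · rw [Fmap_snd]; simp [q2_def]

lemma h0_bottom : ∀ n, ∀ j ≤ 2^n, h0 n (xb n j) = 0 := by
  intro n
  induction n with
  | zero =>
    intro j hj
    interval_cases j
    · rw [xb_zero]; exact h0_q1 0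
    · rw [show xb 0 1 = xb 0 (2^0) by norm_num, xb_top]; exact h0_q2 0
  | succ n ih =>
    intro j hj
    by_cases h : j ≤ 2^n
    · rw [← F1xb, h0_cell1 (xbT h), ih j h, mul_zero]
    · push_neg at h
      obtain ⟨k, rfl⟩ : ∃ k, j = 2^n + k := ⟨j - 2^n, by omega⟩
      have hk : k ≤ 2^n := by
        have : 2^(n+1) = 2^n + 2^n := by ring
        omega
      rw [← F2xb, h0_cell2 (xbT hk), ih k hk, mul_zero]

-- ### the bottom-row flux sum
def BSum (n : ℕ) (g : ℝ × ℝ → ℝ) : ℝ :=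
  ∑ k ∈ Finset.range (2^n), (g (xb n k) + g (xb n (k+1)))

lemma BSum_rec (n : ℕ) (g : ℝ × ℝ → ℝ) :
    BSum (n+1) g = BSum n (g ∘ Fmap 1) + BSum n (g ∘ Fmap 2) := by
  unfold BSum
  have h : 2^(n+1) = 2^n + 2^n := by ring
  rw [h, Finset.sum_range_add]
  congr 1
  · apply Finset.sum_congr rfl
    intro k _
    simp only [Function.comp_apply, F1xb]
  · apply Finset.sum_congr rfl
    intro k _
    simp only [Function.comp_apply, F2xb]
    rw [show 2^n + (k+1) = 2^n + k + 1 by ring]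

lemma al_zero : al 0 = 1 := by norm_num [al, den]
lemma dd_zero : dd 0 = 2 := by norm_num [dd, den]

/-- The main flux identity for h0. -/
lemma h0_flux : ∀ n (g : ℝ × ℝ → ℝ),
    eSum n (h0 n) g = dd n * g (q 0) - al n * BSum n g := by
  intro n
  induction n with
  | zero =>
    intro g
    rw [eSum_zero]
    have e0 : h0 0 (q 0) = 1 := h0_q0 0
    have e1 : h0 0 (q 1) = 0 := h0_q1 0
    have e2 : h0 0 (q 2) = 0 := h0_q2 0
    rw [e0, e1, e2, al_zero, dd_zero]
    have : BSum 0 g = g (q 1) + g (q 2) := by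
      unfold BSum
      rw [show (2:ℕ)^0 = 1 from rfl, Finset.sum_range_one, xb_zero,
        show xb 0 1 = xb 0 (2^0) by norm_num, xb_top]
    rw [this]
    ring
  | succ n ih =>
    intro g
    rw [eSum_rec, Fin.sum_univ_three]
    have e0 : eSum n (h0 (n+1) ∘ Fmap 0) (g ∘ Fmap 0)
        = eSum n (harm n 1 (tt n) (tt n)) (g ∘ Fmap 0) :=
      eSum_congr fun p hp => h0_cell0 (V_subset_T n hp)
    have e1 : eSum n (h0 (n+1) ∘ Fmap 1) (g ∘ Fmap 1)
        = tt n * eSum n (h0 n) (g ∘ Fmap 1) := by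
      rw [show eSum n (h0 (n+1) ∘ Fmap 1) (g ∘ Fmap 1)
          = eSum n (fun p => tt n * h0 n p) (g ∘ Fmap 1) from
        eSum_congr fun p hp => h0_cell1 (V_subset_T n hp)]
      exact eSum_smul n (tt n) (h0 n) (g ∘ Fmap 1)
    have e2 : eSum n (h0 (n+1) ∘ Fmap 2) (g ∘ Fmap 2)
        = tt n * eSum n (h0 n) (g ∘ Fmap 2) := by
      rw [show eSum n (h0 (n+1) ∘ Fmap 2) (g ∘ Fmap 2)
          = eSum n (fun p => tt n * h0 n p) (g ∘ Fmap 2) from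
        eSum_congr fun p hp => h0_cell2 (V_subset_T n hp)]
      exact eSum_smul n (tt n) (h0 n) (g ∘ Fmap 2)
    rw [e0, e1, e2, harm_flux, ih, ih, BSum_rec]
    simp only [Function.comp_apply]
    rw [Fmap_self 0, F1q0, F2q0]
    have k1 := key1 n
    have k2 := key2 n
    have k3 := key3 n
    linear_combination (g (Fmap 0 (q 1)) + g (Fmap 0 (q 2))) * k1 - g (q 0) * k2
      + (BSum n (g ∘ Fmap 1) + BSum n (g ∘ Fmap 2)) * k3
-- ### sInf shifting helper
lemma sInf_image_add (A : Set ℝ) (hne : A.Nonempty) (hbd : BddBelow A) (C : ℝ) :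
    sInf ((fun x => x + C) '' A) = sInf A + C := by
  obtain ⟨L, hL⟩ := hbd
  have hbd' : BddBelow ((fun x => x + C) '' A) := by
    refine ⟨L + C, ?_⟩
    rintro b ⟨a, ha, rfl⟩
    exact add_le_add_left (hL ha) C
  apply le_antisymm
  · rw [show sInf A + C = sInf A + C from rfl]
    have : ∀ a ∈ A, sInf ((fun x => x + C) '' A) - C ≤ a := by
      intro a ha
      rw [sub_le_iff_le_add]
      exact csInf_le hbd' ⟨a, ha, rfl⟩
    have h2 : sInf ((fun x => x + C) '' A) - C ≤ sInf A := le_csInf hne this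
    linarith
  · apply le_csInf (hne.image _)
    rintro b ⟨a, ha, rfl⟩
    exact add_le_add_left (csInf_le ⟨L, hL⟩ ha) C

-- ### membership in Eplus
lemma mem_Eplus {n : ℕ} {x : ℝ × ℝ} :
    x ∈ Eplus n ↔ x = q 0 ∨ ∃ j ≤ 2^n, x = xb n j := by
  simp [Eplus, Ebot, Set.mem_insert_iff]

lemma q0_mem_Eplus (n : ℕ) : q 0 ∈ Eplus n := mem_Eplus.mpr (Or.inl rfl)
lemma xb_mem_Eplus {n j : ℕ} (hj : j ≤ 2^n) : xb n j ∈ Eplus n :=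
  mem_Eplus.mpr (Or.inr ⟨j, hj, rfl⟩)

-- ### indicator evaluations
lemma ind_self (z : ℝ × ℝ) : ind z z = 1 := by simp [ind]
lemma ind_ne {z x : ℝ × ℝ} (h : x ≠ z) : ind z x = 0 := by simp [ind, h]

-- multiplicity of the j-th bottom point
def multR (n j : ℕ) : ℝ := (if j < 2^n then 1 else 0) + (if 0 < j then 1 else 0)

lemma BSum_ind {n j : ℕ} (hj : j ≤ 2^n) (g : ℝ × ℝ → ℝ)
    (hg : ∀ k ≤ 2^n, g (xb n k) = if k = j then 1 else 0) :
    BSum n g = multR n j := by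
  unfold BSum multR
  have hrw : ∀ k ∈ Finset.range (2^n), g (xb n k) + g (xb n (k+1))
      = (if k = j then (1:ℝ) else 0) + (if k+1 = j then (1:ℝ) else 0) := by
    intro k hk
    rw [Finset.mem_range] at hk
    rw [hg k (le_of_lt hk), hg (k+1) hk]
  rw [Finset.sum_congr rfl hrw, Finset.sum_add_distrib]
  congr 1
  · rw [Finset.sum_ite_eq' (Finset.range (2^n)) j (fun _ => (1:ℝ))]
    simp [Finset.mem_range]
  · cases j with
    | zero =>
      rw [if_neg (lt_irrefl 0)]
      apply Finset.sum_eq_zero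
      intro k _
      simp
    | succ j' =>
      rw [if_pos (Nat.succ_pos j')]
      have : ∀ k ∈ Finset.range (2^n), (if k+1 = j'+1 then (1:ℝ) else 0)
          = if k = j' then (1:ℝ) else 0 := by
        intro k _
        simp [Nat.succ_inj]
      rw [Finset.sum_congr rfl this,
        Finset.sum_ite_eq' (Finset.range (2^n)) j' (fun _ => (1:ℝ))]
      have : j' < 2^n := by omega
      simp [Finset.mem_range, this]

-- ### feasibility of h0 for the indicator of q0
lemma h0_feas (n : ℕ) : ∀ x ∈ Eplus n, h0 n x = ind (q 0) x := by
  intro x hx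
  rcases mem_Eplus.mp hx with rfl | ⟨j, hj, rfl⟩
  · rw [h0_q0, ind_self]
  · rw [h0_bottom n j hj, ind_ne (xb_ne_q0 n j)]

/-- energy decomposition for feasible competitors of the pure top indicator -/
lemma Q_ind_q0 (n : ℕ) : Q n (Eplus n) (ind (q 0)) = Energy n (h0 n) := by
  unfold Q
  apply le_antisymm
  · apply csInf_le
    · exact ⟨0, by rintro r ⟨u, _, rfl⟩; exact Energy_nonneg n u⟩
    · exact ⟨h0 n, h0_feas n, rfl⟩
  · have hne : {r | ∃ u, (∀ x ∈ Eplus n, u x = ind (q 0) x) ∧ r = Energy n u}.Nonempty :=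
      ⟨Energy n (h0 n), h0 n, h0_feas n, rfl⟩
    apply le_csInf hne
    rintro r ⟨u, hu, rfl⟩
    set g : ℝ × ℝ → ℝ := u - h0 n with hg
    have hsplit : u = h0 n + g := by funext p; simp [hg]
    have hgq0 : g (q 0) = 0 := by
      have := hu (q 0) (q0_mem_Eplus n)
      simp [hg, this, ind_self, h0_q0]
    have hgbot : ∀ k ≤ 2^n, g (xb n k) = 0 := by
      intro k hk
      have := hu (xb n k) (xb_mem_Eplus hk)
      simp [hg, this, ind_ne (xb_ne_q0 n k), h0_bottom n k hk]
    have hB : BSum n g = 0 := by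
      unfold BSum
      apply Finset.sum_eq_zero
      intro k hk
      rw [Finset.mem_range] at hk
      rw [hgbot k (le_of_lt hk), hgbot (k+1) hk, add_zero]
    rw [hsplit, Energy_add, h0_flux, hgq0, hB]
    have := Energy_nonneg n g
    nlinarith

/-- the shift constant -/
def Cs (n j : ℕ) : ℝ := Energy n (h0 n) - 2 * (5/3 : ℝ)^n * al n * multR n j

lemma Q_sum (n : ℕ) {j : ℕ} (hj : j ≤ 2^n) :
    Q n (Eplus n) (ind (q 0) + ind (xb n j)) = Q n (Eplus n) (ind (xb n j)) + Cs n j := by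
  unfold Q
  have hset : {r | ∃ u, (∀ x ∈ Eplus n, u x = (ind (q 0) + ind (xb n j)) x) ∧ r = Energy n u}
      = (fun x => x + Cs n j) ''
        {r | ∃ u, (∀ x ∈ Eplus n, u x = ind (xb n j) x) ∧ r = Energy n u} := by
    ext r
    constructor
    · rintro ⟨u, hu, rfl⟩
      set g : ℝ × ℝ → ℝ := u - h0 n with hgdef
      have hsplit : u = h0 n + g := by funext p; simp [hgdef]
      have hgfeas : ∀ x ∈ Eplus n, g x = ind (xb n j) x := by
        intro x hx
        rcases mem_Eplus.mp hx with rfl | ⟨k, hk, rfl⟩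
        · have := hu (q 0) (q0_mem_Eplus n)
          simp only [Pi.add_apply, ind_self, ind_ne ((xb_ne_q0 n j).symm)] at this
          simp [hgdef, this, h0_q0, ind_ne ((xb_ne_q0 n j).symm)]
        · have := hu (xb n k) (xb_mem_Eplus hk)
          simp only [Pi.add_apply, ind_ne (xb_ne_q0 n k)] at this
          simp [hgdef, this, h0_bottom n k hk, ind]
      have hgq0 : g (q 0) = 0 := by
        rw [hgfeas (q 0) (q0_mem_Eplus n), ind_ne ((xb_ne_q0 n j).symm)]
      have hB : BSum n g = multR n j := by
        apply BSum_ind hj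
        intro k hk
        rw [hgfeas (xb n k) (xb_mem_Eplus hk)]
        unfold ind
        by_cases h : k = j
        · subst h; simp
        · rw [if_neg (fun hh => h (xb_inj hh)), if_neg h]
      refine ⟨Energy n g, ⟨g, hgfeas, rfl⟩, ?_⟩
      rw [hsplit, Energy_add, h0_flux, hgq0, hB]
      unfold Cs
      ring
    · rintro ⟨r', ⟨g, hgfeas, rfl⟩, rfl⟩
      refine ⟨h0 n + g, ?_, ?_⟩
      · intro x hx
        rcases mem_Eplus.mp hx with rfl | ⟨k, hk, rfl⟩
        · simp [Pi.add_apply, h0_q0, hgfeas (q 0) (q0_mem_Eplus n), ind_self,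
            ind_ne ((xb_ne_q0 n j).symm)]
        · simp [Pi.add_apply, h0_bottom n k hk, hgfeas (xb n k) (xb_mem_Eplus hk),
            ind_ne (xb_ne_q0 n k)]
      · have hgq0 : g (q 0) = 0 := by
          rw [hgfeas (q 0) (q0_mem_Eplus n), ind_ne ((xb_ne_q0 n j).symm)]
        have hB : BSum n g = multR n j := by
          apply BSum_ind hj
          intro k hk
          rw [hgfeas (xb n k) (xb_mem_Eplus hk)]
          unfold ind
          by_cases h : k = j
          · subst h; simp
          · rw [if_neg (fun hh => h (xb_inj hh)), if_neg h]
        rw [Energy_add, h0_flux, hgq0, hB]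
        unfold Cs
        ring
  rw [hset]
  apply sInf_image_add
  · exact ⟨Energy n (ind (xb n j)), ind (xb n j), fun x _ => rfl, rfl⟩
  · exact ⟨0, by rintro r ⟨u, _, rfl⟩; exact Energy_nonneg n u⟩

lemma cond_formula (n : ℕ) {j : ℕ} (hj : j ≤ 2^n) :
    cond n (Eplus n) (q 0) (xb n j) = (5/3 : ℝ)^n * al n * multR n j := by
  unfold cond
  rw [Q_ind_q0, Q_sum n hj]
  unfold Cs
  ring

lemma scaled_al (n : ℕ) : (5/3 : ℝ)^n * al n = 7 * 5^n / (3^n + 6 * 10^n) := by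
  unfold al den
  have h10 : (10:ℝ)^n = 2^n * 5^n := by rw [← mul_pow]; norm_num
  rw [h10, div_pow]
  have h3 : (0:ℝ) < 3^n := by positivity
  have hden : (0:ℝ) < 3^n + 6*(2^n*5^n) := by positivity
  field_simp


/-- Conductances of `E_n⁺ = {q₀, x₀, …, x_{2ⁿ}}` at level `n` between
the top point and the bottom row, with `a_n = 7·5ⁿ/(3ⁿ + 6·10ⁿ)`. -/
theorem stmt10 (n : ℕ) :
    cond n (Eplus n) (q 0) (xb n 0) = 7 * 5 ^ n / (3 ^ n + 6 * 10 ^ n) ∧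
    cond n (Eplus n) (q 0) (xb n (2 ^ n)) = 7 * 5 ^ n / (3 ^ n + 6 * 10 ^ n) ∧
    ∀ j : ℕ, 0 < j → j < 2 ^ n →
      cond n (Eplus n) (q 0) (xb n j) = 2 * (7 * 5 ^ n / (3 ^ n + 6 * 10 ^ n)) := by
  have h2n : 0 < 2^n := Nat.pow_pos (by norm_num)
  refine ⟨?_, ?_, ?_⟩
  · rw [cond_formula n (Nat.zero_le _), scaled_al]
    unfold multR
    rw [if_pos h2n, if_neg (lt_irrefl 0)]
    ring
  · rw [cond_formula n (le_refl _), scaled_al]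
    unfold multR
    rw [if_neg (lt_irrefl (2^n)), if_pos h2n]
    ring
  · intro j hj0 hj1
    rw [cond_formula n (le_of_lt hj1), scaled_al]
    unfold multR
    rw [if_pos hj1, if_pos hj0]
    ring

end SGPaper
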